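/- Let c be a prime number, let N be a natural number, and let z_0, …, z_{N−1} be natural numbers with 0 < z_i < c for every i < N. Then there exist positive natural numbers a_0, …, a_{N−1} such that the sequence (v_i) defined by v_{-2} = 0, v_{-1} = 1, and v_i = v_{i-1}·a_i + v_{i-2} for 0 ≤ i < N satisfies v_i ≡ z_i (mod c) for every 0 ≤ i < N. In particular, c divides no v_j for −1 ≤ j < N. -/

import Mathlib

/-- choose `a` with `q*a+p ≡ z i [MOD c]` and `0 < a`. -/
noncomputable def cfAux (c : ℕ) (z : ℕ → ℕ) (i p q : ℕ) : ℕ :=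
  let u : ZMod c := ((z i : ZMod c) - p) * (q : ZMod c)⁻¹
  if u.val = 0 then c else u.val

/-- the sequence `(v i, v (i+1))`. -/
noncomputable def cfSeq (c : ℕ) (z : ℕ → ℕ) : ℕ → ℕ × ℕ
  | 0 => (0, 1)
  | i + 1 =>
    let pq := cfSeq c z i
    (pq.2, pq.2 * cfAux c z i pq.1 pq.2 + pq.1)

theorem exists_continued_fraction_coding
    (c : ℕ) (hc : c.Prime) (N : ℕ) (z : ℕ → ℕ)
    (hz : ∀ i < N, 0 < z i ∧ z i < c) :
    ∃ a : ℕ → ℕ, (∀ i < N, 0 < a i) ∧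
      ∀ v : ℕ → ℕ,
        v 0 = 0 → v 1 = 1 → (∀ i < N, v (i + 2) = v (i + 1) * a i + v i) →
          (∀ i < N, v (i + 2) ≡ z i [MOD c]) ∧
          (∀ k, 1 ≤ k → k ≤ N + 1 → ¬ c ∣ v k) := by
  haveI : Fact c.Prime := ⟨hc⟩
  haveI : NeZero c := ⟨hc.pos.ne'⟩
  set A : ℕ → ℕ := fun i => cfAux c z i (cfSeq c z i).1 (cfSeq c z i).2 with hA
  have hApos : ∀ i, 0 < A i := by
    intro i
    simp only [hA, cfAux]
    split
    · exact hc.pos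
    · omega
  -- cast of A i equals the intended field element
  have hAcast : ∀ i, ((A i : ZMod c)) =
      ((z i : ZMod c) - ((cfSeq c z i).1 : ZMod c)) * (((cfSeq c z i).2 : ZMod c))⁻¹ := by
    intro i
    simp only [hA, cfAux]
    set u : ZMod c := ((z i : ZMod c) - ((cfSeq c z i).1 : ZMod c)) *
      (((cfSeq c z i).2 : ZMod c))⁻¹ with hu
    split
    · rename_i h
      have hu0 : u = 0 := by
        have h2 : ((u.val : ℕ) : ZMod c) = u := ZMod.natCast_rightInverse u
        rw [h] at h2; simpa using h2.symm
      simp [hu0]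
    · exact ZMod.natCast_rightInverse u
  -- invariant: snd congruent to z (i-1) (or 1) mod c, and fst ok
  have key : ∀ i ≤ N, (((cfSeq c z i).2 : ZMod c)) ≠ 0 ∧
      (i ≠ 0 → (((cfSeq c z i).2 : ZMod c)) = (z (i-1) : ZMod c)) := by
    intro i
    induction i with
    | zero => intro _; simp [cfSeq]
    | succ i ih =>
      intro hiN
      obtain ⟨hne, _⟩ := ih (Nat.le_of_succ_le hiN)
      have hzi := hz i hiN
      have hsnd : (((cfSeq c z (i+1)).2 : ZMod c)) = (z i : ZMod c) := by
        show ((((cfSeq c z i).2 * A i + (cfSeq c z i).1 : ℕ) : ZMod c)) = _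
        push_cast
        rw [hAcast i]
        field_simp
        ring
      refine ⟨?_, fun _ => by simpa using hsnd⟩
      rw [hsnd]
      intro h0
      have : c ∣ z i := by
        rwa [ZMod.natCast_eq_zero_iff] at h0
      have := Nat.le_of_dvd hzi.1 this
      omega
  refine ⟨A, fun i _ => hApos i, ?_⟩
  intro v h0 h1 hrec
  have hv : ∀ i ≤ N, v i = (cfSeq c z i).1 ∧ v (i+1) = (cfSeq c z i).2 := by
    intro i
    induction i with
    | zero => intro _; exact ⟨by simpa [cfSeq] using h0, by simpa [cfSeq] using h1⟩
    | succ i ih =>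
      intro hiN
      obtain ⟨hp, hq⟩ := ih (Nat.le_of_succ_le hiN)
      constructor
      · exact hq
      · rw [hrec i hiN, hp, hq]; rfl
  have hmod : ∀ i < N, v (i + 2) ≡ z i [MOD c] := by
    intro i hiN
    have h2 := (hv (i+1) hiN).2
    have := (key (i+1) hiN).2 (by omega)
    simp only [Nat.add_sub_cancel] at this
    have : ((v (i+2) : ZMod c)) = (z i : ZMod c) := by rw [h2]; exact this
    exact (ZMod.natCast_eq_natCast_iff _ _ _).mp this
  refine ⟨hmod, ?_⟩
  intro k hk1 hkN hdvd
  obtain ⟨j, rfl⟩ : ∃ j, k = j + 1 := ⟨k - 1, by omega⟩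
  have hq := (hv j (by omega)).2
  have hne := (key j (by omega)).1
  rw [hq] at hdvd
  exact hne (by rwa [ZMod.natCast_eq_zero_iff])
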